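/- The nonzero finite-energy solitary wave solutions ψ(x,t) = e^{iωt} φ(x) of the equation i∂_t ψ = -ψ'' - δ(x)F(ψ(0,t)), with F(ψ) = a(|ψ|²)ψ, are exactly the functions φ(x) = C e^{iθ} e^{-√ω|x|} with C > 0, ω > 0, θ ∈ [0,2π), satisfying √ω = a(C²)/2 > 0; in particular for ω ≤ 0 only the zero solitary wave exists. -/

import Mathlib

open Real MeasureTheory Filter Topology Set

section Helpers

private lemma const_of_hasDerivAt_zero {s : Set ℝ} (hso : IsOpen s) (hsc : Convex ℝ s)
    {f : ℝ → ℂ} (hf : ∀ x ∈ s, HasDerivAt f 0 x) {x y : ℝ} (hx : x ∈ s) (hy : y ∈ s) :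
    f x = f y := by
  refine hsc.is_const_of_fderivWithin_eq_zero
    (fun z hz => ((hf z hz).differentiableAt).differentiableWithinAt) (fun z hz => ?_) hx hy
  have h := (hf z hz).hasFDerivAt
  rw [(h.hasFDerivWithinAt).fderivWithin (hso.uniqueDiffWithinAt hz)]
  ext
  simp

private lemma exp_form_of_hasDerivAt {s : Set ℝ} (hso : IsOpen s) (hsc : Convex ℝ s)
    (μ : ℂ) {f : ℝ → ℂ} (hf : ∀ x ∈ s, HasDerivAt f (μ * f x) x)
    {x₀ : ℝ} (hx₀ : x₀ ∈ s) :
    ∀ x ∈ s, f x = f x₀ * Complex.exp (μ * ((x : ℂ) - (x₀ : ℂ))) := by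
  intro x hx
  have key : ∀ z ∈ s, HasDerivAt (fun t : ℝ => f t * Complex.exp (-(μ * t))) 0 z := by
    intro z hz
    have h1 : HasDerivAt (fun t : ℝ => Complex.exp (-(μ * t))) (-μ * Complex.exp (-(μ * z))) z := by
      have h2 : HasDerivAt (fun w : ℂ => Complex.exp (-(μ * w))) (-μ * Complex.exp (-(μ * z))) (z : ℂ) := by
        simpa [mul_comm] using (((hasDerivAt_id ((z : ℝ) : ℂ)).const_mul μ).neg).cexp
      exact h2.comp_ofReal
    have h3 := (hf z hz).mul h1
    refine h3.congr_deriv ?_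
    ring
  have hconst := const_of_hasDerivAt_zero hso hsc key hx hx₀
  calc f x = f x * Complex.exp (-(μ * x)) * Complex.exp (μ * x) := by
        rw [mul_assoc, ← Complex.exp_add]; simp
    _ = f x₀ * Complex.exp (-(μ * x₀)) * Complex.exp (μ * x) := by rw [hconst]
    _ = f x₀ * Complex.exp (μ * ((x : ℂ) - (x₀ : ℂ))) := by
        rw [mul_assoc, ← Complex.exp_add]; congr 1; ring

private lemma ode_structure {ω : ℝ} {φ : ℝ → ℂ}
    (hode : ∀ x : ℝ, x ≠ 0 → DifferentiableAt ℝ φ x ∧ DifferentiableAt ℝ (deriv φ) x ∧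
      deriv (deriv φ) x = (ω : ℂ) * φ x)
    {μ : ℂ} (hμ : μ ≠ 0) (hμ2 : μ ^ 2 = (ω : ℂ))
    {s : Set ℝ} (hso : IsOpen s) (hsc : Convex ℝ s) (h0 : (0:ℝ) ∉ s)
    {x₀ : ℝ} (hx₀ : x₀ ∈ s) :
    ∃ c₁ c₂ : ℂ, (∀ x ∈ s, φ x = c₁ * Complex.exp (μ * x) + c₂ * Complex.exp (-(μ * x))) ∧
      (∀ x ∈ s, deriv φ x = μ * c₁ * Complex.exp (μ * x) - μ * c₂ * Complex.exp (-(μ * x))) := by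
  set u : ℝ → ℂ := fun t => deriv φ t + μ * φ t with hu_def
  set v : ℝ → ℂ := fun t => deriv φ t - μ * φ t with hv_def
  have hu : ∀ z ∈ s, HasDerivAt u (μ * u z) z := by
    intro z hz
    have hz0 : z ≠ 0 := fun h => h0 (h ▸ hz)
    obtain ⟨d1, d2, heq⟩ := hode z hz0
    have h1 : HasDerivAt φ (deriv φ z) z := d1.hasDerivAt
    have h2 : HasDerivAt (deriv φ) ((ω : ℂ) * φ z) z := heq ▸ d2.hasDerivAt
    have := h2.add (h1.const_mul μ)
    refine this.congr_deriv ?_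
    simp only [hu_def]
    rw [← hμ2]; ring
  have hv : ∀ z ∈ s, HasDerivAt v ((-μ) * v z) z := by
    intro z hz
    have hz0 : z ≠ 0 := fun h => h0 (h ▸ hz)
    obtain ⟨d1, d2, heq⟩ := hode z hz0
    have h1 : HasDerivAt φ (deriv φ z) z := d1.hasDerivAt
    have h2 : HasDerivAt (deriv φ) ((ω : ℂ) * φ z) z := heq ▸ d2.hasDerivAt
    have := h2.sub (h1.const_mul μ)
    refine this.congr_deriv ?_
    simp only [hv_def]
    rw [← hμ2]; ring
  have uu := exp_form_of_hasDerivAt hso hsc μ hu hx₀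
  have vv := exp_form_of_hasDerivAt hso hsc (-μ) hv hx₀
  refine ⟨u x₀ * Complex.exp (-(μ * x₀)) / (2 * μ), -(v x₀ * Complex.exp (μ * x₀)) / (2 * μ),
    fun x hx => ?_, fun x hx => ?_⟩
  · have h2 : (2 * μ) * φ x = u x - v x := by simp only [hu_def, hv_def]; ring
    have hux := uu x hx
    have hvx := vv x hx
    have e1 : Complex.exp (μ * ((x : ℂ) - (x₀ : ℂ))) =
        Complex.exp (μ * x) * Complex.exp (-(μ * x₀)) := by
      rw [← Complex.exp_add]; congr 1; ring
    have e2 : Complex.exp ((-μ) * ((x : ℂ) - (x₀ : ℂ))) =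
        Complex.exp (-(μ * x)) * Complex.exp (μ * x₀) := by
      rw [← Complex.exp_add]; congr 1; ring
    have h2μ : (2 : ℂ) * μ ≠ 0 := by simp [hμ]
    apply mul_left_cancel₀ h2μ
    rw [h2, hux, hvx, e1, e2]
    field_simp
    ring
  · have h2 : (2 : ℂ) * deriv φ x = u x + v x := by simp only [hu_def, hv_def]; ring
    have hux := uu x hx
    have hvx := vv x hx
    have e1 : Complex.exp (μ * ((x : ℂ) - (x₀ : ℂ))) =
        Complex.exp (μ * x) * Complex.exp (-(μ * x₀)) := by
      rw [← Complex.exp_add]; congr 1; ring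
    have e2 : Complex.exp ((-μ) * ((x : ℂ) - (x₀ : ℂ))) =
        Complex.exp (-(μ * x)) * Complex.exp (μ * x₀) := by
      rw [← Complex.exp_add]; congr 1; ring
    apply mul_left_cancel₀ (two_ne_zero (α := ℂ))
    rw [h2, hux, hvx, e1, e2]
    field_simp
    ring

private lemma not_integrable_top {g : ℝ → ℝ} (hg : Integrable g (volume : Measure ℝ))
    {ε : ℝ} (hε : 0 < ε) (h : ∀ᶠ x in atTop, ε ≤ g x) : False := by
  obtain ⟨N, hN⟩ := eventually_atTop.mp h
  have h1 := hg.measure_ge_lt_top hε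
  have h2 : Ici N ⊆ {x : ℝ | ε ≤ g x} := fun x hx => hN x hx
  have h3 := measure_mono (μ := (volume : Measure ℝ)) h2
  rw [Real.volume_Ici] at h3
  exact absurd h1 (by simp [top_le_iff.mp h3])

private lemma not_integrable_bot {g : ℝ → ℝ} (hg : Integrable g (volume : Measure ℝ))
    {ε : ℝ} (hε : 0 < ε) (h : ∀ᶠ x in atBot, ε ≤ g x) : False := by
  obtain ⟨N, hN⟩ := eventually_atBot.mp h
  have h1 := hg.measure_ge_lt_top hε
  have h2 : Iic N ⊆ {x : ℝ | ε ≤ g x} := fun x hx => hN x hx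
  have h3 := measure_mono (μ := (volume : Measure ℝ)) h2
  rw [Real.volume_Iic] at h3
  exact absurd h1 (by simp [top_le_iff.mp h3])

private lemma sq_norm_integrable {φ : ℝ → ℂ} (h : MemLp φ 2 (volume : Measure ℝ)) :
    Integrable (fun x => ‖φ x‖ ^ 2) (volume : Measure ℝ) :=
  (memLp_two_iff_integrable_sq_norm h.aestronglyMeasurable).mp h

private lemma tendsto_of_eqOn {f g : ℝ → ℂ} {s : Set ℝ} (h : ∀ x ∈ s, f x = g x)
    (hg : Continuous g) (x : ℝ) : Filter.Tendsto f (𝓝[s] x) (𝓝 (g x)) := by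
  refine Filter.Tendsto.congr' ?_ ((hg.tendsto x).mono_left nhdsWithin_le_nhds)
  exact eventually_nhdsWithin_of_forall (fun y hy => (h y hy).symm)

private lemma norm_mul_exp (c : ℂ) (t : ℝ) :
    ‖c * Complex.exp ((t : ℂ))‖ = ‖c‖ * Real.exp t := by
  simp [norm_mul, Complex.norm_exp]

private lemma norm_add_ge (a b : ℂ) : ‖a‖ - ‖b‖ ≤ ‖a + b‖ := by
  have := norm_sub_norm_le a (-b)
  simpa [sub_neg_eq_add] using this

private lemma normsq_osc (c₁ c₂ : ℂ) (κ x : ℝ) :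
    Complex.normSq (c₁ * Complex.exp (Complex.I * κ * x) +
        c₂ * Complex.exp (-(Complex.I * κ * x))) =
      Complex.normSq c₁ + Complex.normSq c₂ +
        2 * (c₁ * (starRingEnd ℂ) c₂ * Complex.exp (Complex.I * (2 * κ * x))).re := by
  rw [Complex.normSq_add]
  have h1 : Complex.normSq (Complex.exp (Complex.I * κ * x)) = 1 := by
    rw [Complex.normSq_eq_norm_sq, Complex.norm_exp]
    simp [Complex.mul_re]
  have h2 : Complex.normSq (Complex.exp (-(Complex.I * κ * x))) = 1 := by
    rw [Complex.normSq_eq_norm_sq, Complex.norm_exp]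
    simp [Complex.mul_re]
  have h3 : (starRingEnd ℂ) (Complex.exp (-(Complex.I * κ * x))) =
      Complex.exp (Complex.I * κ * x) := by
    rw [← Complex.exp_conj]
    congr 1
    simp [Complex.conj_ofReal]
  have h4 : Complex.exp (Complex.I * κ * x) * Complex.exp (Complex.I * κ * x) =
      Complex.exp (Complex.I * (2 * κ * x)) := by
    rw [← Complex.exp_add]; congr 1; ring
  simp only [map_mul]
  rw [h3, h1, h2]
  rw [show c₁ * Complex.exp (Complex.I * ↑κ * ↑x) *
      ((starRingEnd ℂ) c₂ * Complex.exp (Complex.I * ↑κ * ↑x)) =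
      c₁ * (starRingEnd ℂ) c₂ *
        (Complex.exp (Complex.I * ↑κ * ↑x) * Complex.exp (Complex.I * ↑κ * ↑x)) by ring, h4]
  ring

private lemma osc_zero {φ : ℝ → ℂ} (hL2 : MemLp φ 2 (volume : Measure ℝ))
    {c₁ c₂ : ℂ} {κ : ℝ} (hκ : 0 < κ) {t : Set ℝ}
    (hform : ∀ x ∈ t, φ x = c₁ * Complex.exp (Complex.I * κ * x) +
        c₂ * Complex.exp (-(Complex.I * κ * x)))
    {s : Set ℝ} (hs : MeasurableSet s) (hvol : (volume : Measure ℝ) s = ⊤)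
    (hst : s ⊆ t) (hshift : ∀ x ∈ s, x + π / (2 * κ) ∈ t) :
    c₁ = 0 ∧ c₂ = 0 := by
  set h : ℝ := π / (2 * κ) with hh
  have hg : Integrable (fun x => ‖φ x‖ ^ 2) (volume : Measure ℝ) := sq_norm_integrable hL2
  have hg2 : Integrable (fun x => ‖φ (x + h)‖ ^ 2) (volume : Measure ℝ) :=
    hg.comp_add_right h
  have hG : Integrable (fun x => ‖φ x‖ ^ 2 + ‖φ (x + h)‖ ^ 2) (volume : Measure ℝ) := hg.add hg2
  have hGconst : ∀ x ∈ s, ‖φ x‖ ^ 2 + ‖φ (x + h)‖ ^ 2 =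
      2 * Complex.normSq c₁ + 2 * Complex.normSq c₂ := by
    intro x hx
    have e1 : ‖φ x‖ ^ 2 = Complex.normSq (φ x) := by
      rw [Complex.sq_norm]
    have e2 : ‖φ (x + h)‖ ^ 2 = Complex.normSq (φ (x + h)) := by
      rw [Complex.sq_norm]
    rw [e1, e2, hform x (hst hx), hform (x + h) (hshift x hx), normsq_osc, normsq_osc]
    have hκ' : (κ : ℂ) ≠ 0 := by exact_mod_cast hκ.ne'
    have key : Complex.exp (Complex.I * (2 * κ * ((x + h : ℝ) : ℂ))) =
        -Complex.exp (Complex.I * (2 * κ * x)) := by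
      have harg : Complex.I * (2 * κ * ((x + h : ℝ) : ℂ)) =
          Complex.I * (2 * κ * x) + (π : ℂ) * Complex.I := by
        rw [hh]
        push_cast
        field_simp
      rw [harg, Complex.exp_add, Complex.exp_pi_mul_I]
      ring
    rw [key]
    simp only [mul_neg, Complex.neg_re]
    ring
  have hGint : IntegrableOn
      (fun _ : ℝ => 2 * Complex.normSq c₁ + 2 * Complex.normSq c₂) s (volume : Measure ℝ) :=
    (hG.integrableOn).congr_fun hGconst hs
  rcases ((integrableOn_const_iff).mp hGint) with hc | hvol'
  · rw [enorm_eq_zero] at hc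
    have h1 : Complex.normSq c₁ = 0 ∧ Complex.normSq c₂ = 0 := by
      constructor <;> nlinarith [Complex.normSq_nonneg c₁, Complex.normSq_nonneg c₂]
    exact ⟨Complex.normSq_eq_zero.mp h1.1, Complex.normSq_eq_zero.mp h1.2⟩
  · rw [hvol] at hvol'
    exact absurd hvol' (by simp)

private lemma growth_kill_top {φ : ℝ → ℂ} (hL2 : MemLp φ 2 (volume : Measure ℝ))
    {c₁ c₂ : ℂ} {k : ℝ} (hk : 0 < k) (hc₁ : c₁ ≠ 0)
    (hform : ∀ x ∈ Ioi (0:ℝ), φ x = c₁ * Complex.exp ((k : ℂ) * x) +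
      c₂ * Complex.exp (-((k : ℂ) * x))) : False := by
  have hg := sq_norm_integrable hL2
  refine not_integrable_top hg one_pos ?_
  have htend : Tendsto (fun x : ℝ => ‖c₁‖ * Real.exp (k * x) - ‖c₂‖) atTop atTop := by
    have h1 : Tendsto (fun x : ℝ => k * x) atTop atTop :=
      Tendsto.const_mul_atTop hk tendsto_id
    have h2 : Tendsto (fun x : ℝ => Real.exp (k * x)) atTop atTop :=
      Real.tendsto_exp_atTop.comp h1
    have h3 : Tendsto (fun x : ℝ => ‖c₁‖ * Real.exp (k * x)) atTop atTop :=
      Tendsto.const_mul_atTop (norm_pos_iff.mpr hc₁) h2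
    simpa [sub_eq_add_neg] using tendsto_atTop_add_const_right atTop (-‖c₂‖) h3
  filter_upwards [htend.eventually_ge_atTop 1, eventually_gt_atTop 0] with x h1 hx
  have hφ : ‖φ x‖ ≥ 1 := by
    have e1 : (k : ℂ) * x = ((k * x : ℝ) : ℂ) := by push_cast; ring
    have e2 : -((k : ℂ) * x) = ((-(k * x) : ℝ) : ℂ) := by push_cast; ring
    have hub : ‖c₂ * Complex.exp ((-(k * x) : ℝ) : ℂ)‖ ≤ ‖c₂‖ := by
      rw [norm_mul_exp]
      exact mul_le_of_le_one_right (norm_nonneg _) (Real.exp_le_one_iff.mpr (by nlinarith))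
    have hlb := norm_add_ge (c₁ * Complex.exp (((k * x : ℝ) : ℂ)))
      (c₂ * Complex.exp (((-(k * x) : ℝ)) : ℂ))
    rw [norm_mul_exp] at hlb
    rw [hform x hx, e2, e1]
    linarith
  nlinarith [norm_nonneg (φ x)]

private lemma growth_kill_bot {φ : ℝ → ℂ} (hL2 : MemLp φ 2 (volume : Measure ℝ))
    {c₁ c₂ : ℂ} {k : ℝ} (hk : 0 < k) (hc₂ : c₂ ≠ 0)
    (hform : ∀ x ∈ Iio (0:ℝ), φ x = c₁ * Complex.exp ((k : ℂ) * x) +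
      c₂ * Complex.exp (-((k : ℂ) * x))) : False := by
  have hg := sq_norm_integrable hL2
  refine not_integrable_bot hg one_pos ?_
  have htend : Tendsto (fun x : ℝ => ‖c₂‖ * Real.exp (-(k * x)) - ‖c₁‖) atBot atTop := by
    have h1 : Tendsto (fun x : ℝ => k * x) atBot atBot :=
      Tendsto.const_mul_atBot hk tendsto_id
    have h1' : Tendsto (fun x : ℝ => -(k * x)) atBot atTop := tendsto_neg_atBot_atTop.comp h1
    have h2 : Tendsto (fun x : ℝ => Real.exp (-(k * x))) atBot atTop :=
      Real.tendsto_exp_atTop.comp h1'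
    have h3 : Tendsto (fun x : ℝ => ‖c₂‖ * Real.exp (-(k * x))) atBot atTop :=
      Tendsto.const_mul_atTop (norm_pos_iff.mpr hc₂) h2
    simpa [sub_eq_add_neg] using tendsto_atTop_add_const_right atBot (-‖c₁‖) h3
  filter_upwards [htend.eventually_ge_atTop 1, eventually_lt_atBot 0] with x h1 hx
  have hφ : ‖φ x‖ ≥ 1 := by
    have e1 : (k : ℂ) * x = ((k * x : ℝ) : ℂ) := by push_cast; ring
    have e2 : -((k : ℂ) * x) = ((-(k * x) : ℝ) : ℂ) := by push_cast; ring
    have hub : ‖c₁ * Complex.exp ((k * x : ℝ) : ℂ)‖ ≤ ‖c₁‖ := by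
      rw [norm_mul_exp]
      exact mul_le_of_le_one_right (norm_nonneg _) (Real.exp_le_one_iff.mpr (by nlinarith))
    have hlb := norm_add_ge (c₂ * Complex.exp (((-(k * x) : ℝ)) : ℂ))
      (c₁ * Complex.exp (((k * x : ℝ) : ℂ)))
    rw [norm_mul_exp] at hlb
    rw [hform x hx, e2, e1, add_comm]
    linarith
  nlinarith [norm_nonneg (φ x)]

private lemma linear_kill_top {φ : ℝ → ℂ} (hL2 : MemLp φ 2 (volume : Measure ℝ))
    {b d : ℂ} (hform : ∀ x ∈ Ioi (0:ℝ), φ x = b + d * x) : b = 0 ∧ d = 0 := by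
  have hg := sq_norm_integrable hL2
  have hd : d = 0 := by
    by_contra hd
    refine not_integrable_top hg one_pos ?_
    have htend : Tendsto (fun x : ℝ => ‖d‖ * x - ‖b‖) atTop atTop := by
      simpa [sub_eq_add_neg] using tendsto_atTop_add_const_right atTop (-‖b‖)
        (Tendsto.const_mul_atTop (norm_pos_iff.mpr hd) tendsto_id)
    filter_upwards [htend.eventually_ge_atTop 1, eventually_gt_atTop 0] with x h1 hx
    have hφ : ‖φ x‖ ≥ 1 := by
      have hlb := norm_add_ge (d * (x : ℂ)) b
      have hnx : ‖d * (x : ℂ)‖ = ‖d‖ * x := by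
        rw [norm_mul, Complex.norm_real, Real.norm_eq_abs, abs_of_pos hx]
      rw [hnx] at hlb
      rw [hform x hx, add_comm]
      linarith
    nlinarith [norm_nonneg (φ x)]
  subst hd
  refine ⟨?_, rfl⟩
  by_contra hb
  refine not_integrable_top hg (ε := ‖b‖ ^ 2) (pow_pos (norm_pos_iff.mpr hb) 2) ?_
  filter_upwards [eventually_gt_atTop 0] with x hx
  rw [hform x hx]
  simp

private lemma linear_kill_bot {φ : ℝ → ℂ} (hL2 : MemLp φ 2 (volume : Measure ℝ))
    {b d : ℂ} (hform : ∀ x ∈ Iio (0:ℝ), φ x = b + d * x) : b = 0 ∧ d = 0 := by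
  have hg := sq_norm_integrable hL2
  have hd : d = 0 := by
    by_contra hd
    refine not_integrable_bot hg one_pos ?_
    have htend : Tendsto (fun x : ℝ => ‖d‖ * (-x) - ‖b‖) atBot atTop := by
      simpa [sub_eq_add_neg] using tendsto_atTop_add_const_right atBot (-‖b‖)
        (Tendsto.const_mul_atTop (norm_pos_iff.mpr hd) tendsto_neg_atBot_atTop)
    filter_upwards [htend.eventually_ge_atTop 1, eventually_lt_atBot 0] with x h1 hx
    have hφ : ‖φ x‖ ≥ 1 := by
      have hlb := norm_add_ge (d * (x : ℂ)) b
      have hnx : ‖d * (x : ℂ)‖ = ‖d‖ * (-x) := by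
        rw [norm_mul, Complex.norm_real, Real.norm_eq_abs, abs_of_neg hx]
      rw [hnx] at hlb
      rw [hform x hx, add_comm]
      linarith
    nlinarith [norm_nonneg (φ x)]
  subst hd
  refine ⟨?_, rfl⟩
  by_contra hb
  refine not_integrable_bot hg (ε := ‖b‖ ^ 2) (pow_pos (norm_pos_iff.mpr hb) 2) ?_
  filter_upwards [eventually_lt_atBot 0] with x hx
  rw [hform x hx]
  simp

private lemma hasDerivAt_Aexp (A c : ℂ) (x : ℝ) :
    HasDerivAt (fun t : ℝ => A * Complex.exp (c * t)) (c * (A * Complex.exp (c * x))) x := by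
  have h1 : HasDerivAt (fun w : ℂ => A * Complex.exp (c * w))
      (c * (A * Complex.exp (c * (x : ℂ)))) (x : ℂ) := by
    have := (((hasDerivAt_id ((x : ℝ) : ℂ)).const_mul c).cexp).const_mul A
    simp only [id] at this
    refine this.congr_deriv ?_
    ring
  exact h1.comp_ofReal

end Helpers

/-- A (finite-energy) solitary-wave profile for the NLS equation
`i ψ_t = -ψ'' - δ(x) F(ψ(0,t))`, `F(ψ) = a(|ψ|²)ψ`: the amplitude `φ` is
continuous, square integrable, solves `φ'' = ω φ` away from the origin, and its
derivative has one-sided limits at `0` with jump `φ'(0+) - φ'(0-) = -F(φ(0))`. -/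
def IsSolitaryWave (a : ℝ → ℝ) (ω : ℝ) (φ : ℝ → ℂ) : Prop :=
  Continuous φ ∧ MemLp φ 2 (volume : Measure ℝ) ∧
  (∀ x : ℝ, x ≠ 0 → DifferentiableAt ℝ φ x ∧ DifferentiableAt ℝ (deriv φ) x ∧
      deriv (deriv φ) x = (ω : ℂ) * φ x) ∧
  ∃ dp dm : ℂ,
    Tendsto (deriv φ) (𝓝[>] (0:ℝ)) (𝓝 dp) ∧
    Tendsto (deriv φ) (𝓝[<] (0:ℝ)) (𝓝 dm) ∧
    dp - dm = -((a (‖φ 0‖ ^ 2) : ℂ) * φ 0)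

/-- the nonzero solitary waves are exactly the functions
`φ(x) = C e^{iθ} e^{-√ω|x|}` with `C > 0`, `ω > 0`, `θ ∈ [0,2π)` and
`√ω = a(C²)/2 > 0`; in particular for `ω ≤ 0` only the zero wave exists. -/
theorem solitary_wave_classification
    (a : ℝ → ℝ) (ha : ContDiff ℝ 1 a) (ω : ℝ) (φ : ℝ → ℂ) :
    (IsSolitaryWave a ω φ ∧ φ ≠ 0) ↔
      (0 < ω ∧ ∃ C θ : ℝ, 0 < C ∧ 0 ≤ θ ∧ θ < 2 * Real.pi ∧
        Real.sqrt ω = a (C ^ 2) / 2 ∧ 0 < a (C ^ 2) ∧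
        ∀ x : ℝ, φ x = (C : ℂ) * Complex.exp (Complex.I * θ) *
          Complex.exp (-(Real.sqrt ω * |x| : ℝ))) := by
  constructor
  · rintro ⟨⟨hcont, hL2, hode, dp, dm, hdp, hdm, hjump⟩, hφne⟩
    -- common facts
    have h1R : (1:ℝ) ∈ Ioi (0:ℝ) := by norm_num
    have h1L : (-1:ℝ) ∈ Iio (0:ℝ) := by norm_num
    have h0R : (0:ℝ) ∉ Ioi (0:ℝ) := by simp
    have h0L : (0:ℝ) ∉ Iio (0:ℝ) := by simp
    have hφzero : (∀ x ∈ Ioi (0:ℝ), φ x = 0) → (∀ x ∈ Iio (0:ℝ), φ x = 0) → False := by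
      intro hR hL
      have hz : φ 0 = 0 := by
        have t1 : Tendsto φ (𝓝[>] (0:ℝ)) (𝓝 (φ 0)) :=
          (hcont.tendsto 0).mono_left nhdsWithin_le_nhds
        have t2 : Tendsto φ (𝓝[>] (0:ℝ)) (𝓝 ((fun _ : ℝ => (0:ℂ)) 0)) :=
          tendsto_of_eqOn hR continuous_const 0
        exact tendsto_nhds_unique t1 t2
      apply hφne
      funext x
      rcases lt_trichotomy x 0 with hx | hx | hx
      · exact hL x hx
      · simpa [hx] using hz
      · exact hR x hx
    rcases lt_trichotomy ω 0 with hω | hω | hω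
    · -- ω < 0 : oscillatory, impossible
      exfalso
      set κ : ℝ := Real.sqrt (-ω) with hκ_def
      have hκ : 0 < κ := Real.sqrt_pos.mpr (by linarith)
      have hκ2 : κ ^ 2 = -ω := Real.sq_sqrt (by linarith)
      set μ : ℂ := Complex.I * κ with hμ_def
      have hμ : μ ≠ 0 := mul_ne_zero Complex.I_ne_zero (by exact_mod_cast hκ.ne')
      have hμ2 : μ ^ 2 = (ω : ℂ) := by
        rw [hμ_def, mul_pow, Complex.I_sq]
        have : (κ : ℂ) ^ 2 = ((κ ^ 2 : ℝ) : ℂ) := by push_cast; ring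
        rw [this, hκ2]
        push_cast
        ring
      have hπκ : 0 < π / (2 * κ) := by positivity
      obtain ⟨c₁, c₂, hfR, -⟩ :=
        ode_structure hode hμ hμ2 isOpen_Ioi (convex_Ioi 0) h0R h1R
      obtain ⟨d₁, d₂, hfL, -⟩ :=
        ode_structure hode hμ hμ2 isOpen_Iio (convex_Iio 0) h0L h1L
      have hRz := osc_zero hL2 hκ (t := Ioi 0) (fun x hx => by
          simpa [hμ_def, mul_assoc] using hfR x hx)
        measurableSet_Ioi Real.volume_Ioi (subset_refl _)
        (fun x hx => by simp only [mem_Ioi] at hx ⊢; linarith)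
      have hLz := osc_zero hL2 hκ (t := Iio 0) (fun x hx => by
          simpa [hμ_def, mul_assoc] using hfL x hx)
        (s := Iio (-(π / (2 * κ)))) measurableSet_Iio Real.volume_Iio
        (fun x hx => by simp only [mem_Iio] at hx ⊢; linarith)
        (fun x hx => by simp only [mem_Iio] at hx ⊢; linarith)
      refine hφzero (fun x hx => ?_) (fun x hx => ?_)
      · rw [hfR x hx, hRz.1, hRz.2]; ring
      · rw [hfL x hx, hLz.1, hLz.2]; ring
    · -- ω = 0 : linear, impossible
      exfalso
      subst hω
      have hkey : ∀ (s : Set ℝ), IsOpen s → Convex ℝ s → (0:ℝ) ∉ s → ∀ x₀, x₀ ∈ s →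
          ∀ x ∈ s, φ x = (φ x₀ - deriv φ x₀ * x₀) + deriv φ x₀ * x := by
        intro s hso hsc h0s x₀ hx₀ x hx
        have hd0 : ∀ z ∈ s, HasDerivAt (deriv φ) 0 z := by
          intro z hz
          obtain ⟨d1, d2, heq⟩ := hode z (fun h => h0s (h ▸ hz))
          have := d2.hasDerivAt
          rw [heq] at this
          simpa using this
        have hdconst : ∀ z ∈ s, deriv φ z = deriv φ x₀ :=
          fun z hz => const_of_hasDerivAt_zero hso hsc hd0 hz hx₀
        set d : ℂ := deriv φ x₀ with hd_def
        have hlin : ∀ z ∈ s, HasDerivAt (fun t : ℝ => φ t - d * t) 0 z := by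
          intro z hz
          obtain ⟨d1, -, -⟩ := hode z (fun h => h0s (h ▸ hz))
          have h1 : HasDerivAt (fun t : ℝ => ((t : ℂ))) 1 z := by
            simpa using (hasDerivAt_id ((z : ℝ) : ℂ)).comp_ofReal
          have h2 := d1.hasDerivAt.sub (h1.const_mul d)
          rw [mul_one] at h2
          have h3 : deriv φ z - d = 0 := by rw [hdconst z hz]; ring
          rwa [h3] at h2
        have := const_of_hasDerivAt_zero hso hsc hlin hx hx₀
        have h4 : φ x - d * x = φ x₀ - d * x₀ := this
        have : φ x = (φ x₀ - d * x₀) + d * x := by linear_combination h4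
        simpa [hd_def] using this
      have hR := hkey (Ioi 0) isOpen_Ioi (convex_Ioi 0) h0R 1 h1R
      have hL := hkey (Iio 0) isOpen_Iio (convex_Iio 0) h0L (-1) h1L
      obtain ⟨hbR, hdR⟩ := linear_kill_top hL2 hR
      obtain ⟨hbL, hdL⟩ := linear_kill_bot hL2 hL
      refine hφzero (fun x hx => ?_) (fun x hx => ?_)
      · rw [hR x hx, hbR, hdR]; ring
      · rw [hL x hx, hbL, hdL]; ring
    · -- ω > 0 : the soliton
      refine ⟨hω, ?_⟩
      set k : ℝ := Real.sqrt ω with hk_def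
      have hk : 0 < k := Real.sqrt_pos.mpr hω
      have hk2 : k ^ 2 = ω := Real.sq_sqrt hω.le
      have hμ : ((k : ℂ)) ≠ 0 := by exact_mod_cast hk.ne'
      have hμ2 : ((k : ℂ)) ^ 2 = (ω : ℂ) := by
        have : ((k : ℂ)) ^ 2 = ((k ^ 2 : ℝ) : ℂ) := by push_cast; ring
        rw [this, hk2]
      obtain ⟨c₁, c₂, hfR, hfR'⟩ :=
        ode_structure hode hμ hμ2 isOpen_Ioi (convex_Ioi 0) h0R h1R
      obtain ⟨d₁, d₂, hfL, hfL'⟩ :=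
        ode_structure hode hμ hμ2 isOpen_Iio (convex_Iio 0) h0L h1L
      have hc₁ : c₁ = 0 := by
        by_contra hc₁
        exact growth_kill_top hL2 hk hc₁ hfR
      have hd₂ : d₂ = 0 := by
        by_contra hd₂
        exact growth_kill_bot hL2 hk hd₂ hfL
      -- φ 0 = c₂ and φ 0 = d₁
      have hcgR : Continuous (fun x : ℝ => c₂ * Complex.exp (-((k : ℂ) * x))) := by
        have := (hasDerivAt_Aexp c₂ (-(k : ℂ)))
        have hcc : Continuous (fun x : ℝ => c₂ * Complex.exp ((-(k:ℂ)) * x)) := by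
          apply continuous_const.mul
          exact Complex.continuous_exp.comp ((continuous_const.mul Complex.continuous_ofReal))
        simpa [neg_mul] using hcc
      have hcgL : Continuous (fun x : ℝ => d₁ * Complex.exp ((k : ℂ) * x)) := by
        apply continuous_const.mul
        exact Complex.continuous_exp.comp ((continuous_const.mul Complex.continuous_ofReal))
      have hφ0R : φ 0 = c₂ := by
        have t1 : Tendsto φ (𝓝[>] (0:ℝ)) (𝓝 (φ 0)) :=
          (hcont.tendsto 0).mono_left nhdsWithin_le_nhds
        have t2 : Tendsto φ (𝓝[>] (0:ℝ))
            (𝓝 ((fun x : ℝ => c₂ * Complex.exp (-((k : ℂ) * x))) 0)) :=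
          tendsto_of_eqOn (fun x hx => by rw [hfR x hx, hc₁]; ring) hcgR 0
        have := tendsto_nhds_unique t1 t2
        simpa using this
      have hφ0L : φ 0 = d₁ := by
        have t1 : Tendsto φ (𝓝[<] (0:ℝ)) (𝓝 (φ 0)) :=
          (hcont.tendsto 0).mono_left nhdsWithin_le_nhds
        have t2 : Tendsto φ (𝓝[<] (0:ℝ))
            (𝓝 ((fun x : ℝ => d₁ * Complex.exp ((k : ℂ) * x)) 0)) :=
          tendsto_of_eqOn (fun x hx => by rw [hfL x hx, hd₂]; ring) hcgL 0
        have := tendsto_nhds_unique t1 t2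
        simpa using this
      -- one-sided derivative limits
      have hdp : dp = -((k:ℂ) * c₂) := by
        have hcg : Continuous (fun x : ℝ => -((k:ℂ) * c₂ * Complex.exp (-((k : ℂ) * x)))) := by
          apply Continuous.neg
          apply continuous_const.mul
          exact Complex.continuous_exp.comp ((continuous_const.mul Complex.continuous_ofReal).neg)
        have t2 : Tendsto (deriv φ) (𝓝[>] (0:ℝ))
            (𝓝 ((fun x : ℝ => -((k:ℂ) * c₂ * Complex.exp (-((k : ℂ) * x)))) 0)) :=
          tendsto_of_eqOn (fun x hx => by rw [hfR' x hx, hc₁]; ring) hcg 0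
        have := tendsto_nhds_unique hdp t2
        simpa using this
      have hdm : dm = (k:ℂ) * d₁ := by
        have hcg : Continuous (fun x : ℝ => (k:ℂ) * d₁ * Complex.exp ((k : ℂ) * x)) := by
          apply continuous_const.mul
          exact Complex.continuous_exp.comp ((continuous_const.mul Complex.continuous_ofReal))
        have t2 : Tendsto (deriv φ) (𝓝[<] (0:ℝ))
            (𝓝 ((fun x : ℝ => (k:ℂ) * d₁ * Complex.exp ((k : ℂ) * x)) 0)) :=
          tendsto_of_eqOn (fun x hx => by rw [hfL' x hx, hd₂]; ring) hcg 0
        have := tendsto_nhds_unique hdm t2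
        simpa using this
      -- φ 0 ≠ 0
      have hφ00 : φ 0 ≠ 0 := by
        intro h00
        refine hφzero (fun x hx => ?_) (fun x hx => ?_)
        · rw [hfR x hx, hc₁, ← hφ0R, h00]; ring
        · rw [hfL x hx, hd₂, ← hφ0L, h00]; ring
      -- the jump condition gives a (|φ 0|²) = 2k
      have hjump2 : ((a (‖φ 0‖ ^ 2) : ℝ) : ℂ) = 2 * (k : ℂ) := by
        rw [hdp, hdm, ← hφ0R, ← hφ0L] at hjump
        have h5 : (((a (‖φ 0‖ ^ 2) : ℝ) : ℂ) - 2 * (k:ℂ)) * φ 0 = 0 := by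
          linear_combination hjump
        rcases mul_eq_zero.mp h5 with h6 | h6
        · exact sub_eq_zero.mp h6
        · exact absurd h6 hφ00
      have hareal : a (‖φ 0‖ ^ 2) = 2 * k := by exact_mod_cast hjump2
      have hC : 0 < ‖φ 0‖ := norm_pos_iff.mpr hφ00
      set θ₀ : ℝ := Complex.arg (φ 0) with hθ₀_def
      set θ : ℝ := if θ₀ < 0 then θ₀ + 2 * π else θ₀ with hθ_def
      have hθ1 : 0 ≤ θ := by
        rw [hθ_def]; split_ifs with h
        · linarith [Complex.neg_pi_lt_arg (φ 0), Real.pi_pos]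
        · linarith [not_lt.mp h]
      have hθ2 : θ < 2 * π := by
        rw [hθ_def]; split_ifs with h
        · linarith
        · linarith [Complex.arg_le_pi (φ 0), Real.pi_pos]
      have hA : ((‖φ 0‖ : ℝ) : ℂ) * Complex.exp (Complex.I * θ) = φ 0 := by
        have base := Complex.norm_mul_exp_arg_mul_I (φ 0)
        have hexpeq : Complex.exp (Complex.I * θ) = Complex.exp ((θ₀ : ℂ) * Complex.I) := by
          rw [hθ_def]
          split_ifs with h
          · rw [show Complex.I * (((θ₀ + 2 * π : ℝ)) : ℂ) =
                (θ₀ : ℂ) * Complex.I + 2 * (π : ℂ) * Complex.I by push_cast; ring,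
              Complex.exp_add, Complex.exp_two_pi_mul_I, mul_one]
          · rw [mul_comm]
        rw [hexpeq]
        exact base
      refine ⟨‖φ 0‖, θ, hC, hθ1, hθ2, ?_, ?_, ?_⟩
      · rw [hareal]; ring
      · rw [hareal]; linarith
      · intro x
        rcases lt_trichotomy x 0 with hx | hx | hx
        · have hA' : ((‖φ 0‖ : ℝ) : ℂ) * Complex.exp (Complex.I * θ) = d₁ := by
            rw [hA, hφ0L]
          have harg : -(((k * |x| : ℝ)) : ℂ) = (k : ℂ) * x := by
            rw [abs_of_neg hx]; push_cast; ring
          rw [hfL x hx, hd₂, hA', harg]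
          ring
        · subst hx
          rw [show -(((k * |(0:ℝ)| : ℝ)) : ℂ) = 0 by simp, Complex.exp_zero, mul_one, hA]
        · have hA' : ((‖φ 0‖ : ℝ) : ℂ) * Complex.exp (Complex.I * θ) = c₂ := by
            rw [hA, hφ0R]
          have harg : -(((k * |x| : ℝ)) : ℂ) = -((k : ℂ) * x) := by
            rw [abs_of_pos hx]; push_cast; ring
          rw [hfR x hx, hc₁, hA', harg]
          ring
  · rintro ⟨hω, C, θ, hC, hθ0, hθ2π, hsqrt, hapos, hform⟩
    set k : ℝ := Real.sqrt ω with hk_def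
    have hk : 0 < k := Real.sqrt_pos.mpr hω
    have hk2 : k ^ 2 = ω := Real.sq_sqrt hω.le
    have hωc : ((k : ℂ)) * ((k : ℂ)) = (ω : ℂ) := by
      have h' : ((k : ℂ)) * (k : ℂ) = ((k ^ 2 : ℝ) : ℂ) := by push_cast; ring
      rw [h', hk2]
    set A : ℂ := (C : ℂ) * Complex.exp (Complex.I * θ) with hA_def
    have hA0 : A ≠ 0 := mul_ne_zero (by exact_mod_cast hC.ne') (Complex.exp_ne_zero _)
    have hAabs : ‖A‖ = C := by
      rw [hA_def, norm_mul, Complex.norm_exp]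
      simp [abs_of_nonneg hC.le, Complex.mul_re]
    have hφx : ∀ x : ℝ, φ x = A * Complex.exp ((-(k * |x|) : ℝ) : ℂ) := by
      intro x; rw [hform x]; push_cast; ring_nf
    have hφ0 : φ 0 = A := by rw [hφx 0]; simp
    have hφne : φ ≠ 0 := fun h => hA0 (by rw [← hφ0, h]; simp)
    have hR_eq : ∀ x ∈ Ioi (0:ℝ), φ x = A * Complex.exp ((-(k:ℂ)) * x) := by
      intro x hx
      rw [hφx x, abs_of_pos hx]
      push_cast
      ring_nf
    have hL_eq : ∀ x ∈ Iio (0:ℝ), φ x = A * Complex.exp ((k:ℂ) * x) := by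
      intro x hx
      rw [hφx x, abs_of_neg hx]
      push_cast
      ring_nf
    have hcont : Continuous φ := by
      have hc : Continuous (fun x : ℝ => A * Complex.exp ((-(k * |x|) : ℝ) : ℂ)) :=
        continuous_const.mul (Complex.continuous_exp.comp (Complex.continuous_ofReal.comp
          ((continuous_const.mul continuous_abs).neg)))
      exact (funext hφx : φ = _) ▸ hc
    have hDR : ∀ x ∈ Ioi (0:ℝ), DifferentiableAt ℝ φ x ∧
        deriv φ x = (-(k:ℂ)) * (A * Complex.exp ((-(k:ℂ)) * x)) := by
      intro x hx
      have hev : φ =ᶠ[𝓝 x] (fun t : ℝ => A * Complex.exp ((-(k:ℂ)) * t)) :=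
        eventually_of_mem (isOpen_Ioi.mem_nhds hx) hR_eq
      have hd := hasDerivAt_Aexp A (-(k:ℂ)) x
      exact ⟨hev.differentiableAt_iff.mpr hd.differentiableAt,
        by rw [hev.deriv_eq, hd.deriv]⟩
    have hDL : ∀ x ∈ Iio (0:ℝ), DifferentiableAt ℝ φ x ∧
        deriv φ x = ((k:ℂ)) * (A * Complex.exp (((k:ℂ)) * x)) := by
      intro x hx
      have hev : φ =ᶠ[𝓝 x] (fun t : ℝ => A * Complex.exp (((k:ℂ)) * t)) :=
        eventually_of_mem (isOpen_Iio.mem_nhds hx) hL_eq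
      have hd := hasDerivAt_Aexp A ((k:ℂ)) x
      exact ⟨hev.differentiableAt_iff.mpr hd.differentiableAt,
        by rw [hev.deriv_eq, hd.deriv]⟩
    have hode : ∀ x : ℝ, x ≠ 0 → DifferentiableAt ℝ φ x ∧ DifferentiableAt ℝ (deriv φ) x ∧
        deriv (deriv φ) x = (ω : ℂ) * φ x := by
      intro x hx0
      rcases hx0.lt_or_gt with hx | hx
      · refine ⟨(hDL x hx).1, ?_, ?_⟩
        all_goals {
          have hev2 : deriv φ =ᶠ[𝓝 x] (fun t : ℝ => (k:ℂ) * (A * Complex.exp ((k:ℂ) * t))) :=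
            eventually_of_mem (isOpen_Iio.mem_nhds hx) (fun y hy => (hDL y hy).2)
          have hd2 : HasDerivAt (fun t : ℝ => (k:ℂ) * (A * Complex.exp ((k:ℂ) * t)))
              ((k:ℂ) * ((k:ℂ) * (A * Complex.exp ((k:ℂ) * x)))) x := by
            simpa [mul_assoc] using hasDerivAt_Aexp ((k:ℂ) * A) ((k:ℂ)) x
          first
          | exact hev2.differentiableAt_iff.mpr hd2.differentiableAt
          | (rw [hev2.deriv_eq, hd2.deriv, hL_eq x hx, ← hωc]; ring)
        }
      · refine ⟨(hDR x hx).1, ?_, ?_⟩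
        all_goals {
          have hev2 : deriv φ =ᶠ[𝓝 x]
              (fun t : ℝ => (-(k:ℂ)) * (A * Complex.exp ((-(k:ℂ)) * t))) :=
            eventually_of_mem (isOpen_Ioi.mem_nhds hx) (fun y hy => (hDR y hy).2)
          have hd2 : HasDerivAt (fun t : ℝ => (-(k:ℂ)) * (A * Complex.exp ((-(k:ℂ)) * t)))
              ((-(k:ℂ)) * ((-(k:ℂ)) * (A * Complex.exp ((-(k:ℂ)) * x)))) x := by
            simpa [mul_assoc] using hasDerivAt_Aexp ((-(k:ℂ)) * A) (-(k:ℂ)) x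
          first
          | exact hev2.differentiableAt_iff.mpr hd2.differentiableAt
          | (rw [hev2.deriv_eq, hd2.deriv, hR_eq x hx, ← hωc]; ring)
        }
    have hmem : MemLp φ 2 (volume : Measure ℝ) := by
      rw [memLp_two_iff_integrable_sq_norm hcont.aestronglyMeasurable]
      set m : ℝ := min 1 (4 * k ^ 2) with hm_def
      have hm : 0 < m := lt_min one_pos (by positivity)
      have hbound : ∀ x : ℝ, ‖φ x‖ ^ 2 ≤ (4 * C ^ 2 / m) * (1 + x ^ 2)⁻¹ := by
        intro x
        have hnφ : ‖φ x‖ = C * Real.exp (-(k * |x|)) := by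
          rw [hφx x, norm_mul_exp, hAabs]
        set s : ℝ := 2 * (k * |x|) with hs_def
        have hs : 0 ≤ s := by positivity
        have hsq : ‖φ x‖ ^ 2 = C ^ 2 * Real.exp (-s) := by
          rw [hnφ, mul_pow]
          congr 1
          rw [pow_two, ← Real.exp_add, hs_def]
          congr 1
          ring
        have h1 : s / 2 + 1 ≤ Real.exp (s / 2) := Real.add_one_le_exp (s / 2)
        have h2 : Real.exp (s / 2) * Real.exp (s / 2) = Real.exp s := by
          rw [← Real.exp_add]; congr 1; ring
        have h3 : (1 + s ^ 2) / 4 ≤ Real.exp s := by nlinarith [Real.exp_pos (s / 2)]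
        have hs2 : s ^ 2 = 4 * k ^ 2 * x ^ 2 := by
          rw [hs_def, mul_pow, mul_pow, sq_abs]; ring
        have h4 : m * (1 + x ^ 2) ≤ 1 + s ^ 2 := by
          have hm1 : m ≤ 1 := min_le_left _ _
          have hm2 : m ≤ 4 * k ^ 2 := min_le_right _ _
          nlinarith [sq_nonneg x]
        have h5 : m * (1 + x ^ 2) / 4 ≤ Real.exp s := by linarith
        have hpos : 0 < m * (1 + x ^ 2) / 4 := by positivity
        have h6 : Real.exp (-s) ≤ 4 / (m * (1 + x ^ 2)) := by
          rw [Real.exp_neg]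
          calc (Real.exp s)⁻¹ ≤ (m * (1 + x ^ 2) / 4)⁻¹ := inv_anti₀ hpos h5
            _ = 4 / (m * (1 + x ^ 2)) := by rw [inv_div]
        rw [hsq]
        calc C ^ 2 * Real.exp (-s) ≤ C ^ 2 * (4 / (m * (1 + x ^ 2))) :=
              mul_le_mul_of_nonneg_left h6 (by positivity)
          _ = (4 * C ^ 2 / m) * (1 + x ^ 2)⁻¹ := by
              field_simp
      have hint : Integrable (fun x : ℝ => (4 * C ^ 2 / m) * (1 + x ^ 2)⁻¹)
          (volume : Measure ℝ) := integrable_inv_one_add_sq.const_mul _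
      refine hint.mono' ((hcont.norm.pow 2).aestronglyMeasurable) ?_
      refine Eventually.of_forall (fun x => ?_)
      rw [Real.norm_eq_abs, abs_of_nonneg (by positivity)]
      exact hbound x
    have hdpT : Tendsto (deriv φ) (𝓝[>] (0:ℝ)) (𝓝 (-((k:ℂ) * A))) := by
      have hcg : Continuous (fun x : ℝ => (-(k:ℂ)) * (A * Complex.exp ((-(k:ℂ)) * x))) :=
        continuous_const.mul (continuous_const.mul (Complex.continuous_exp.comp
          (continuous_const.mul Complex.continuous_ofReal)))
      have := tendsto_of_eqOn (fun x hx => (hDR x hx).2) hcg 0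
      simpa [neg_mul] using this
    have hdmT : Tendsto (deriv φ) (𝓝[<] (0:ℝ)) (𝓝 ((k:ℂ) * A)) := by
      have hcg : Continuous (fun x : ℝ => ((k:ℂ)) * (A * Complex.exp (((k:ℂ)) * x))) :=
        continuous_const.mul (continuous_const.mul (Complex.continuous_exp.comp
          (continuous_const.mul Complex.continuous_ofReal)))
      have := tendsto_of_eqOn (fun x hx => (hDL x hx).2) hcg 0
      simpa [mul_assoc] using this
    have ha2 : a (C ^ 2) = 2 * k := by
      rw [hk_def] at hsqrt ⊢
      linarith
    have hjump : -((k:ℂ) * A) - (k:ℂ) * A =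
        -((a (‖φ 0‖ ^ 2) : ℂ) * φ 0) := by
      rw [hφ0, hAabs, ha2]
      push_cast
      ring
    exact ⟨⟨hcont, hmem, hode, -((k:ℂ) * A), (k:ℂ) * A, hdpT, hdmT, hjump⟩, hφne⟩
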